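/- Fix v ≥ 1, let X := Fin v → Bool, n := 2^v, and let t ∈ X be the all-true valuation. Let (W, R) be a Kripke frame and let x : ℕ with x ≤ n - 2. Then the following are equivalent: (i) every world has an R-successor (seriality), and for every valuation assignment V : W → X and every world w with V w = t, either (t ∉ img(V,w) and img(V,w).ncard ≤ x) or t ∈ img(V,w) — i.e., the D-plane axiom ◇⊤ ∧ α_K(x,*) of the system S_D(x,*) is valid on the frame; (ii) every world w satisfies: (¬R w w, and sees(w) is finite with 1 ≤ sees(w).ncard and sees(w).ncard ≤ x) or R w w. -/

import Mathlib

private lemma key_contra (v x : ℕ) (hv : 1 ≤ v) (hx : x ≤ 2 ^ v - 2) {W : Type*}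
    (R : W → W → Prop)
    (hax : ∀ (V : W → (Fin v → Bool)) (w : W), V w = (fun _ => true) →
        ((fun _ => true : Fin v → Bool) ∉ V '' {w' | R w w'} ∧
          (V '' {w' | R w w'}).ncard ≤ x) ∨
        (fun _ => true : Fin v → Bool) ∈ V '' {w' | R w w'})
    (w : W) (hww : ¬ R w w) (S : Finset W) (hS : ↑S ⊆ {w' | R w w'})
    (hcard : S.card = x + 1) : False := by
  classical
  set t : Fin v → Bool := fun _ => true with ht
  have h2 : 2 ≤ 2 ^ v := by
    calc 2 = 2 ^ 1 := by norm_num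
    _ ≤ 2 ^ v := Nat.pow_le_pow_right (by norm_num) hv
  have hcardX : Fintype.card {y : Fin v → Bool // y ≠ t} = 2 ^ v - 1 := by
    rw [Fintype.card_subtype_compl, Fintype.card_subtype_eq]
    simp
  have hle : Fintype.card S ≤ Fintype.card {y : Fin v → Bool // y ≠ t} := by
    rw [hcardX, Fintype.card_coe, hcard]; omega
  obtain ⟨e⟩ := Function.Embedding.nonempty_of_card_le hle
  have hwS : w ∉ S := fun h => hww (hS h)
  set V : W → (Fin v → Bool) := fun w' =>
    if h : w' ∈ S then (e ⟨w', h⟩ : {y : Fin v → Bool // y ≠ t}).1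
    else if w' = w then t else (fun _ => false) with hV
  have hVw : V w = t := by simp [hV, hwS]
  have hntimg : t ∉ V '' {w' | R w w'} := by
    rintro ⟨w'', hw'', hVeq⟩
    have hne : w'' ≠ w := fun h => hww (h ▸ hw'')
    by_cases hm : w'' ∈ S
    · exact (e ⟨w'', hm⟩).2 (by simpa [hV, hm] using hVeq)
    · have : (fun _ => false : Fin v → Bool) = t := by simpa [hV, hm, hne] using hVeq
      have := congrFun this ⟨0, hv⟩
      simp [ht] at this
  rcases hax V w hVw with ⟨_, hnc⟩ | hmem
  · have hinj : Set.InjOn V ↑S := by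
      intro s1 h1 s2 h2 hVeq
      have h1' : s1 ∈ S := h1
      have h2' : s2 ∈ S := h2
      have : (e ⟨s1, h1'⟩ : {y : Fin v → Bool // y ≠ t}).1 = (e ⟨s2, h2'⟩).1 := by
        simpa [hV, h1', h2'] using hVeq
      have := e.injective (Subtype.ext this)
      exact congrArg Subtype.val this
    have hsub : V '' ↑S ⊆ V '' {w' | R w w'} := Set.image_mono hS
    have h1 : (V '' (↑S : Set W)).ncard = x + 1 := by
      rw [Set.ncard_image_of_injOn hinj]
      simp [hcard]
    have h2' : (V '' (↑S : Set W)).ncard ≤ (V '' {w' | R w w'}).ncard :=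
      Set.ncard_le_ncard hsub (Set.toFinite _)
    omega
  · exact hntimg hmem

/-- Frame correspondence for the D-plane axiom `◇⊤ ∧ α_K(x,*)` of the system
`S_D(x,*)`: it is valid on a Kripke frame `(W, R)` iff every world `w` either
is irreflexive and sees at least 1 and at most `x` worlds, or is reflexive.
Here `t = (fun _ => true)` is the all-true valuation,
`img(V,w) = V '' {w' | R w w'}`, and `x ≤ 2^v - 2`. -/
theorem alphaDstar_valid_iff_frame_condition (v : ℕ) (hv : 1 ≤ v) {W : Type*}
    (R : W → W → Prop) (x : ℕ) (hx : x ≤ 2 ^ v - 2) :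
    ((∀ w : W, ∃ w' : W, R w w') ∧
      ∀ (V : W → (Fin v → Bool)) (w : W), V w = (fun _ => true) →
        ((fun _ => true : Fin v → Bool) ∉ V '' {w' | R w w'} ∧
          (V '' {w' | R w w'}).ncard ≤ x) ∨
        (fun _ => true : Fin v → Bool) ∈ V '' {w' | R w w'}) ↔
    (∀ w : W,
      (¬ R w w ∧ {w' | R w w'}.Finite ∧ 1 ≤ {w' | R w w'}.ncard ∧
        {w' | R w w'}.ncard ≤ x) ∨ R w w) := by
  classical
  constructor
  · rintro ⟨hser, hax⟩ w
    by_cases hww : R w w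
    · exact Or.inr hww
    left
    have hfinsets : ∀ S : Finset W, ↑S ⊆ {w' | R w w'} → S.card ≤ x := by
      intro S hS
      by_contra hgt
      push_neg at hgt
      obtain ⟨S', hS', hcard'⟩ := Finset.exists_subset_card_eq (s := S) (n := x + 1) hgt
      exact key_contra v x hv hx R hax w hww S'
        (fun a ha => hS (hS' ha)) hcard'
    have hfin : {w' | R w w'}.Finite := by
      by_contra hinf
      have hinf' : {w' | R w w'}.Infinite := hinf
      obtain ⟨S, hSsub, hScard⟩ := hinf'.exists_subset_card_eq (x + 1)
      exact key_contra v x hv hx R hax w hww S hSsub hScard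
    have hle : {w' | R w w'}.ncard ≤ x := by
      have := hfinsets hfin.toFinset (by simp)
      rwa [Set.ncard_eq_toFinset_card _ hfin] 
    have hne : {w' | R w w'}.Nonempty := by
      obtain ⟨w', hw'⟩ := hser w
      exact ⟨w', hw'⟩
    have h1 : 1 ≤ {w' | R w w'}.ncard := by
      have := (Set.ncard_pos hfin).mpr hne
      omega
    exact ⟨hww, hfin, h1, hle⟩
  · intro hcond
    constructor
    · intro w
      rcases hcond w with ⟨_, hfin, h1, _⟩ | hww
      · have hne : {w' | R w w'}.Nonempty :=
          Set.nonempty_of_ncard_ne_zero (by omega)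
        exact hne
      · exact ⟨w, hww⟩
    · intro V w hVw
      rcases hcond w with ⟨hww, hfin, _, hle⟩ | hww
      · by_cases hmem : (fun _ => true : Fin v → Bool) ∈ V '' {w' | R w w'}
        · exact Or.inr hmem
        · left
          refine ⟨hmem, ?_⟩
          calc (V '' {w' | R w w'}).ncard ≤ {w' | R w w'}.ncard :=
                Set.ncard_image_le hfin
          _ ≤ x := hle
      · exact Or.inr ⟨w, hww, hVw⟩
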